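/- For N ≥ 3, the W state W_N = (1/√N) ∑_{j=1}^{N} |0⟩^⊗(j-1) ⊗ |1⟩ ⊗ |0⟩^⊗(N-j) has optimal bond dimension exactly N: it can be written as a sum of N tensor powers x_k^⊗N of qubit vectors, but not as a sum of N-1 or fewer such tensor powers. -/

import Mathlib

open scoped BigOperators

/-- The `N`-fold tensor power of a qubit vector `x : Fin 2 → ℂ`, written as a
coefficient tensor on `(Fin N → Fin 2)`. -/
def tpow (x : Fin 2 → ℂ) (N : ℕ) : (Fin N → Fin 2) → ℂ :=
  fun f => ∏ i, x (f i)

/-- A state of `N` qubits is symmetric if it is invariant under every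
permutation of the tensor factors. -/
def IsSymmetricState {N : ℕ} (ψ : (Fin N → Fin 2) → ℂ) : Prop :=
  ∀ σ : Equiv.Perm (Fin N), ∀ f : Fin N → Fin 2, ψ (f ∘ σ) = ψ f

/-- A family of qubit vectors is pairwise linearly independent if every two
distinct members are linearly independent. -/
def PairwiseLinIndep {D : ℕ} (x : Fin D → Fin 2 → ℂ) : Prop :=
  ∀ k l : Fin D, k ≠ l → LinearIndependent ℂ ![x k, x l]

/-- Optimal bond dimension: the minimal `D` such that `ψ` is a sum of `D`
`N`-fold tensor powers of qubit vectors. -/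
noncomputable def bondDim {N : ℕ} (ψ : (Fin N → Fin 2) → ℂ) : ℕ :=
  sInf {D | ∃ x : Fin D → Fin 2 → ℂ, ψ = ∑ k : Fin D, tpow (x k) N}

/-- Standard basis vector `|0⟩` of `ℂ²`. -/
def e0 : Fin 2 → ℂ := fun i => if i = 0 then 1 else 0

/-- Standard basis vector `|1⟩` of `ℂ²`. -/
def e1 : Fin 2 → ℂ := fun i => if i = 1 then 1 else 0

/-- The GHZ state of `N` qubits. -/
noncomputable def GHZ (N : ℕ) : (Fin N → Fin 2) → ℂ :=
  (1 / (Real.sqrt 2 : ℂ)) • (tpow e0 N + tpow e1 N)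

/-- The W state of `N` qubits. -/
noncomputable def Wstate (N : ℕ) : (Fin N → Fin 2) → ℂ :=
  fun f => (1 / (Real.sqrt N : ℂ)) *
    ∑ j : Fin N, ∏ i : Fin N, (if i = j then e1 (f i) else e0 (f i))

/-- Tensor product of an `M`-qubit tensor and an `L`-qubit tensor. -/
def otimes {M L : ℕ} (ξ : (Fin M → Fin 2) → ℂ) (χ : (Fin L → Fin 2) → ℂ) :
    (Fin (M + L) → Fin 2) → ℂ :=
  fun f => ξ (fun i => f (Fin.castAdd L i)) * χ (fun j => f (Fin.natAdd M j))

/-- Schmidt rank of an `(M, L)`-bipartite state: the minimal number of product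
terms needed to express it. -/
noncomputable def schmidtRank {M L : ℕ} (ψ : (Fin (M + L) → Fin 2) → ℂ) : ℕ :=
  sInf {s | ∃ ξ : Fin s → (Fin M → Fin 2) → ℂ, ∃ χ : Fin s → (Fin L → Fin 2) → ℂ,
    ψ = ∑ k : Fin s, otimes (ξ k) (χ k)}

/-- Reduced density matrix of the first `M` qubits of an `(M + L)`-qubit state,
obtained by tracing out the last `L` qubits. -/
noncomputable def rdm (M L : ℕ) (ψ : (Fin (M + L) → Fin 2) → ℂ) :
    Matrix (Fin M → Fin 2) (Fin M → Fin 2) ℂ :=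
  Matrix.of fun a b => ∑ g : Fin L → Fin 2, ψ (Fin.append a g) * star (ψ (Fin.append b g))

namespace AuxW

def wt {N : ℕ} (f : Fin N → Fin 2) : ℕ := (Finset.univ.filter fun i => f i = 1).card

lemma fin2_eq_zero {v : Fin 2} (h : v ≠ 1) : v = 0 := by
  fin_cases v <;> simp_all

lemma wt_le {N : ℕ} (f : Fin N → Fin 2) : wt f ≤ N := by
  classical
  calc wt f ≤ (Finset.univ : Finset (Fin N)).card := Finset.card_filter_le _ _
  _ = N := by simp

lemma tpow_apply_wt (x : Fin 2 → ℂ) {N : ℕ} (f : Fin N → Fin 2) :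
    tpow x N f = x 0 ^ (N - wt f) * x 1 ^ wt f := by
  classical
  unfold tpow
  rw [← Finset.prod_filter_mul_prod_filter_not Finset.univ (fun i => f i = 1)]
  have h1 : (∏ i ∈ Finset.univ.filter fun i => f i = 1, x (f i)) = x 1 ^ wt f := by
    rw [Finset.prod_congr rfl (fun i hi => by
      rw [(Finset.mem_filter.mp hi).2]), Finset.prod_const]
    rfl
  have h0 : (∏ i ∈ Finset.univ.filter fun i => ¬ f i = 1, x (f i)) = x 0 ^ (N - wt f) := by
    rw [Finset.prod_congr rfl (fun i hi => by
      rw [fin2_eq_zero (Finset.mem_filter.mp hi).2]), Finset.prod_const]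
    congr 1
    have := Finset.card_filter_add_card_filter_not (s := (Finset.univ : Finset (Fin N)))
      (p := fun i => f i = 1)
    simp only [Finset.card_univ, Fintype.card_fin] at this
    unfold wt; omega
  rw [h1, h0]; ring

def delta {N : ℕ} (j : Fin N) : Fin N → Fin 2 := fun i => if i = j then 1 else 0

lemma wt_delta {N : ℕ} (j : Fin N) : wt (delta j) = 1 := by
  classical
  unfold wt delta
  have : (Finset.univ.filter fun i => (if i = j then (1 : Fin 2) else 0) = 1) = {j} := by
    ext i
    by_cases h : i = j <;> simp [h]
  rw [this, Finset.card_singleton]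

lemma Wstate_apply {N : ℕ} (f : Fin N → Fin 2) :
    Wstate N f = (1 / (Real.sqrt N : ℂ)) * (if wt f = 1 then 1 else 0) := by
  classical
  unfold Wstate
  congr 1
  have hprod : ∀ j : Fin N, (∏ i, (if i = j then e1 (f i) else e0 (f i)))
      = if f = delta j then (1 : ℂ) else 0 := by
    intro j
    have hterm : ∀ i, (if i = j then e1 (f i) else e0 (f i))
        = if f i = delta j i then (1 : ℂ) else 0 := by
      intro i
      unfold delta e0 e1
      by_cases h : i = j
      · simp [h]
      · simp [h]
    rw [Finset.prod_congr rfl (fun i _ => hterm i), Fintype.prod_boole]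
    simp [funext_iff]
  rw [Finset.sum_congr rfl (fun j _ => hprod j)]
  by_cases hw : wt f = 1
  · obtain ⟨a, ha⟩ := Finset.card_eq_one.mp hw
    have hf : f = delta a := by
      funext i
      have hmem : f i = 1 ↔ i = a := by
        constructor
        · intro h
          have : i ∈ Finset.univ.filter fun i => f i = 1 := by simp [h]
          rw [ha] at this; simpa using this
        · intro h
          have : i ∈ ({a} : Finset (Fin N)) := by simp [h]
          rw [← ha] at this; simpa using this
      unfold delta
      by_cases h : i = a
      · rw [if_pos h]; exact hmem.mpr h
      · simp only [if_neg h]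
        exact fin2_eq_zero (fun hc => h (hmem.mp hc))
    have hterm : ∀ j : Fin N, (if f = delta j then (1:ℂ) else 0) = if j = a then 1 else 0 := by
      intro j
      by_cases h : j = a
      · subst h; rw [if_pos hf, if_pos rfl]
      · rw [if_neg h, if_neg]
        intro hc
        have h2 : delta a a = delta j a := by rw [← hf, ← hc]
        unfold delta at h2
        rw [if_pos rfl, if_neg (fun h3 : a = j => h h3.symm)] at h2
        exact absurd h2 (by decide)
    rw [Finset.sum_congr rfl (fun j _ => hterm j), if_pos hw]
    simp
  · rw [if_neg hw]
    apply Finset.sum_eq_zero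
    intro j _
    rw [if_neg]
    intro hc
    exact hw (by rw [hc]; exact wt_delta j)

end AuxW

namespace AuxW2
open AuxW

lemma card_filter_val_lt (N j : ℕ) (h : j ≤ N) :
    ((Finset.univ : Finset (Fin N)).filter fun i => i.val < j).card = j := by
  classical
  rw [← Finset.card_range j]
  refine Finset.card_nbij (fun i => (i : ℕ)) ?_ ?_ ?_
  · intro a ha; simp only [Finset.coe_filter, Finset.mem_filter, Set.mem_setOf_eq] at ha; simpa using ha.2
  · intro a _ b _ hab; exact Fin.ext hab
  · intro b hb
    simp only [Finset.coe_range, Set.mem_Iio] at hb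
    exact ⟨⟨b, lt_of_lt_of_le hb h⟩, by simp [hb], rfl⟩

def conf (N j : ℕ) : Fin N → Fin 2 := fun i => if (i : ℕ) < j then 1 else 0

lemma wt_conf (N j : ℕ) (h : j ≤ N) : wt (conf N j) = j := by
  classical
  unfold wt conf
  have heq : (Finset.univ.filter fun i : Fin N => (if i.val < j then (1 : Fin 2) else 0) = 1)
      = Finset.univ.filter fun i : Fin N => i.val < j := by
    apply Finset.filter_congr
    intro i _
    by_cases hi : i.val < j <;> simp [hi]
  rw [heq, card_filter_val_lt N j h]

lemma key {ι : Type} [DecidableEq ι] :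
    ∀ (d : ℕ) (T : Finset ι) (a b w : ι → ℂ) (M : ℕ),
      T.card = d → d ≤ M → (∀ k ∈ T, b k ≠ 0) →
      (∀ j, 2 ≤ j → j ≤ d + 1 → ∑ k ∈ T, w k * a k ^ (M + 1 - j) * b k ^ j = 0) →
      ∑ k ∈ T, w k * a k ^ M * b k = 0 := by
  intro d
  induction d with
  | zero =>
    intro T a b w M hT _ _ _
    rw [Finset.card_eq_zero.mp hT]; simp
  | succ d ih =>
    intro T a b w M hT hdM hb hm
    have hne : T.Nonempty := Finset.card_pos.mp (by omega)
    obtain ⟨k0, hk0⟩ := hne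
    set T' := T.erase k0 with hT'
    have hcard' : T'.card = d := by rw [hT', Finset.card_erase_of_mem hk0, hT]; omega
    set w' : ι → ℂ := fun k => w k * (b k0 * a k - a k0 * b k) with hw'
    have hw'k0 : w' k0 = 0 := by simp only [hw']; ring
    have hstep : ∀ j, 2 ≤ j → j ≤ d + 1 →
        ∑ k ∈ T', w' k * a k ^ (M - 1 + 1 - j) * b k ^ j = 0 := by
      intro j hj2 hjd
      have h1 := hm j hj2 (by omega)
      have h2 := hm (j + 1) (by omega) (by omega)
      have hsplit : ∀ k ∈ T, w' k * a k ^ (M - 1 + 1 - j) * b k ^ j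
          = b k0 * (w k * a k ^ (M + 1 - j) * b k ^ j)
            - a k0 * (w k * a k ^ (M + 1 - (j + 1)) * b k ^ (j + 1)) := by
        intro k _
        have e1 : M + 1 - j = (M - j) + 1 := by omega
        have e2 : M + 1 - (j + 1) = M - j := by omega
        have e3 : M - 1 + 1 - j = M - j := by omega
        rw [e1, e2, e3, hw']
        ring
      have : ∑ k ∈ T', w' k * a k ^ (M - 1 + 1 - j) * b k ^ j
          = ∑ k ∈ T, w' k * a k ^ (M - 1 + 1 - j) * b k ^ j :=
        Finset.sum_erase T (by rw [hw'k0]; ring)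
      rw [this, Finset.sum_congr rfl hsplit, Finset.sum_sub_distrib,
        ← Finset.mul_sum, ← Finset.mul_sum, h1, h2]
      ring
    have hb' : ∀ k ∈ T', b k ≠ 0 := fun k hk => hb k (Finset.mem_of_mem_erase hk)
    have hS := ih T' a b w' (M - 1) hcard' (by omega) hb' hstep
    -- expand hS
    have hexp : ∀ k ∈ T', w' k * a k ^ (M - 1) * b k
        = b k0 * (w k * a k ^ M * b k) - a k0 * (w k * a k ^ (M - 1) * b k ^ 2) := by
      intro k _
      have e4 : a k ^ M = a k ^ (M - 1) * a k := by
        rw [← pow_succ]; congr 1; omega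
      rw [e4, hw']; ring
    rw [Finset.sum_congr rfl hexp, Finset.sum_sub_distrib, ← Finset.mul_sum,
      ← Finset.mul_sum] at hS
    -- second moment over T
    have hm2 := hm 2 le_rfl (by omega)
    have e5 : M + 1 - 2 = M - 1 := by omega
    rw [e5] at hm2
    have hY : ∑ k ∈ T', w k * a k ^ (M - 1) * b k ^ 2
        = - (w k0 * a k0 ^ (M - 1) * b k0 ^ 2) := by
      rw [hT', Finset.sum_erase_eq_sub hk0, hm2]; ring
    rw [hY] at hS
    have hgoal : b k0 * ∑ k ∈ T, w k * a k ^ M * b k = 0 := by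
      rw [← Finset.add_sum_erase T _ hk0, ← hT']
      have e4 : a k0 ^ M = a k0 ^ (M - 1) * a k0 := by
        rw [← pow_succ]; congr 1; omega
      rw [mul_add, e4]
      have : b k0 * ∑ k ∈ T', w k * a k ^ M * b k
          = a k0 * -(w k0 * a k0 ^ (M - 1) * b k0 ^ 2) := by
        linear_combination hS
      rw [this]; ring
    rcases mul_eq_zero.mp hgoal with h | h
    · exact absurd h (hb k0 hk0)
    · exact h

end AuxW2

namespace AuxW3
open AuxW AuxW2

lemma sqrtN_ne (N : ℕ) (hN : 3 ≤ N) : ((Real.sqrt N : ℝ) : ℂ) ≠ 0 := by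
  simp only [ne_eq, Complex.ofReal_eq_zero]
  refine (Real.sqrt_ne_zero' ).mpr ?_
  exact_mod_cast (by omega : 0 < N)

lemma upper (N : ℕ) (hN : 3 ≤ N) :
    ∃ x : Fin N → Fin 2 → ℂ, Wstate N = ∑ k : Fin N, tpow (x k) N := by
  classical
  have hN0 : N ≠ 0 := by omega
  have hNc : (N : ℂ) ≠ 0 := Nat.cast_ne_zero.mpr hN0
  set ω : ℂ := Complex.exp (2 * Real.pi * Complex.I / N) with hω
  have hprim : IsPrimitiveRoot ω N := Complex.isPrimitiveRoot_exp N hN0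
  have hω0 : ω ≠ 0 := Complex.exp_ne_zero _
  have hsqrt := sqrtN_ne N hN
  set C : ℂ := 1 / ((N : ℂ) * (Real.sqrt N : ℂ)) with hC
  set z : Fin N → ℂ := fun k => (ω⁻¹) ^ (k : ℕ) * C with hz
  set γ : Fin N → ℂ := fun k => (z k) ^ ((N : ℂ)⁻¹) with hγ
  have hγN : ∀ k, γ k ^ N = z k := fun k => Complex.cpow_nat_inv_pow _ hN0
  refine ⟨fun k v => γ k * (if v = 0 then 1 else ω ^ (k : ℕ)), ?_⟩
  funext f
  rw [Wstate_apply f, Finset.sum_apply]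
  set w := wt f with hwt
  have hwN : w ≤ N := wt_le f
  have hterm : ∀ k : Fin N, tpow (fun v => γ k * (if v = 0 then 1 else ω ^ (k : ℕ))) N f
      = (ω⁻¹ * ω ^ w) ^ (k : ℕ) * C := by
    intro k
    rw [tpow_apply_wt]
    rw [if_pos rfl, if_neg (by decide : ¬ (1 : Fin 2) = 0), mul_one, mul_pow]
    have e1 : γ k ^ (N - w) * (γ k ^ w * (ω ^ (k : ℕ)) ^ w)
        = γ k ^ (N - w + w) * (ω ^ (k : ℕ)) ^ w := by rw [pow_add]; ring
    rw [e1, show N - w + w = N by omega, hγN, hz,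
      show ((ω : ℂ) ^ (k : ℕ)) ^ w = (ω ^ w) ^ (k : ℕ) from pow_right_comm ω _ _]
    show ω⁻¹ ^ (k : ℕ) * C * (ω ^ w) ^ (k : ℕ) = (ω⁻¹ * ω ^ w) ^ (k : ℕ) * C
    rw [mul_pow]
    ring
  rw [Finset.sum_congr rfl (fun k _ => hterm k), ← Finset.sum_mul,
    Fin.sum_univ_eq_sum_range (fun k => (ω⁻¹ * ω ^ w) ^ k) N]
  by_cases hw1 : w = 1
  · rw [if_pos hw1, hw1, pow_one, inv_mul_cancel₀ hω0]
    simp only [one_pow, Finset.sum_const, Finset.card_range, nsmul_eq_mul, mul_one]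
    rw [hC]
    field_simp
  · rw [if_neg hw1]
    have hζ : ω⁻¹ * ω ^ w ≠ 1 := by
      intro h
      have hωw : ω ^ w = ω := by
        field_simp at h
        exact h
      rcases Nat.lt_or_ge w N with hlt | hge
      · exact hw1 (hprim.pow_inj hlt (by omega) (by rw [hωw, pow_one]))
      · have hwN' : w = N := le_antisymm hwN hge
        rw [hwN', hprim.pow_eq_one] at hωw
        exact hprim.ne_one (by omega) hωw.symm
    rw [geom_sum_eq hζ N]
    have hζN : (ω⁻¹ * ω ^ w) ^ N = 1 := by
      rw [mul_pow, inv_pow, show ((ω : ℂ) ^ w) ^ N = (ω ^ N) ^ w from pow_right_comm ω _ _,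
        hprim.pow_eq_one, one_pow, inv_one, one_mul]
    rw [hζN]
    simp

lemma lower (N : ℕ) (hN : 3 ≤ N) (D : ℕ) (hD : D < N)
    (x : Fin D → Fin 2 → ℂ) (hx : Wstate N = ∑ k : Fin D, tpow (x k) N) : False := by
  classical
  set T : Finset (Fin D) := Finset.univ.filter (fun k => x k 1 ≠ 0) with hT
  have hmom : ∀ j : ℕ, 1 ≤ j → j ≤ N →
      ∑ k ∈ T, x k 0 ^ (N - j) * x k 1 ^ j
        = (1 / (Real.sqrt N : ℂ)) * (if j = 1 then 1 else 0) := by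
    intro j h1 h2
    have hev := congrFun hx (conf N j)
    rw [Wstate_apply, Finset.sum_apply,
      Finset.sum_congr rfl (fun k _ => tpow_apply_wt (x k) (conf N j)),
      wt_conf N j h2] at hev
    have hsub : ∑ k ∈ T, x k 0 ^ (N - j) * x k 1 ^ j
        = ∑ k : Fin D, x k 0 ^ (N - j) * x k 1 ^ j := by
      apply Finset.sum_subset (Finset.filter_subset _ _)
      intro k _ hk
      have hk0 : x k 1 = 0 := by
        by_contra hc
        exact hk (Finset.mem_filter.mpr ⟨Finset.mem_univ k, hc⟩)
      rw [hk0, zero_pow (by omega : j ≠ 0), mul_zero]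
    rw [hsub, ← hev]
  have hcard : T.card ≤ N - 1 := by
    have h1 : T.card ≤ D := by
      have := Finset.card_filter_le (Finset.univ : Finset (Fin D)) (fun k => x k 1 ≠ 0)
      simpa using this
    omega
  have hm : ∀ j : ℕ, 2 ≤ j → j ≤ T.card + 1 →
      ∑ k ∈ T, (fun _ => (1:ℂ)) k * x k 0 ^ (N - 1 + 1 - j) * x k 1 ^ j = 0 := by
    intro j hj2 hjd
    have hjN : j ≤ N := by omega
    have := hmom j (by omega) hjN
    rw [if_neg (by omega), mul_zero] at this
    rw [show N - 1 + 1 - j = N - j by omega]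
    simpa using this
  have h0 := key T.card T (fun k => x k 0) (fun k => x k 1) (fun _ => (1:ℂ)) (N - 1)
    rfl (by omega) (fun k hk => (Finset.mem_filter.mp hk).2) hm
  have h1 := hmom 1 le_rfl (by omega)
  rw [if_pos rfl, mul_one] at h1
  simp only [one_mul, pow_one] at h0 h1
  rw [h0] at h1
  exact (one_div_ne_zero (sqrtN_ne N hN)) h1.symm

end AuxW3

/-- for `N ≥ 3` the W state has optimal bond dimension exactly
`N`: it is a sum of `N` tensor powers, but not of `N-1` or fewer. -/
theorem bondDim_W (N : ℕ) (hN : 3 ≤ N) :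
    bondDim (Wstate N) = N ∧
      (∃ x : Fin N → Fin 2 → ℂ, Wstate N = ∑ k : Fin N, tpow (x k) N) ∧
      (∀ D : ℕ, D < N → ¬ ∃ x : Fin D → Fin 2 → ℂ,
        Wstate N = ∑ k : Fin D, tpow (x k) N) := by
  have hup := AuxW3.upper N hN
  have hlow : ∀ D : ℕ, D < N → ¬ ∃ x : Fin D → Fin 2 → ℂ,
      Wstate N = ∑ k : Fin D, tpow (x k) N := by
    rintro D hD ⟨y, hy⟩
    exact AuxW3.lower N hN D hD y hy
  refine ⟨?_, hup, hlow⟩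
  apply le_antisymm
  · exact Nat.sInf_le hup
  · apply le_csInf ⟨N, hup⟩
    intro D hD
    by_contra hc
    push_neg at hc
    exact hlow D hc hD
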